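/- arXiv:2006.04260 — 3 statements merged into one kernel-verified Lean document; each statement's English description precedes it below -/
import Mathlib

section
/- For every propositional RTL formula ψ and every state x ∈ ℝⁿ: if ϱ(x, ψ) < 0 then x ⊭ ψ, and if x ⊭ ψ then ϱ(x, ψ) ≤ 0. (Soundness and completeness of the quantitative semantics, propositional level, part 2 of Theorem 2.) -/
open scoped NNReal

/-- Propositional RTL formulae over states in `ℝⁿ`. -/
inductive PropRTL (n : ℕ) : Type where
  | tt : PropRTL n
  | atom : ((Fin n → ℝ) → ℝ) → PropRTL n
  | not : PropRTL n → PropRTL n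
  | and : PropRTL n → PropRTL n → PropRTL n

/-- Satisfaction of a propositional RTL formula by a state `x`. -/
def PropSat {n : ℕ} (x : Fin n → ℝ) : PropRTL n → Prop
  | PropRTL.tt => True
  | PropRTL.atom h => 0 ≤ h x
  | PropRTL.not ψ => ¬ PropSat x ψ
  | PropRTL.and ψ₁ ψ₂ => PropSat x ψ₁ ∧ PropSat x ψ₂

/-- Quantitative semantics `ϱ(x, ψ)` of a propositional RTL formula, valued in the
extended reals. -/
noncomputable def varrho {n : ℕ} (x : Fin n → ℝ) : PropRTL n → EReal
  | PropRTL.tt => ⊤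
  | PropRTL.atom h => (h x : EReal)
  | PropRTL.not ψ => - varrho x ψ
  | PropRTL.and ψ₁ ψ₂ => min (varrho x ψ₁) (varrho x ψ₂)

/-- Temporal RTL formulae over maps `R : ℝ≥0 → 2^(ℝⁿ)`. -/
inductive TempRTL (n : ℕ) : Type where
  | all : PropRTL n → TempRTL n
  | or : TempRTL n → TempRTL n → TempRTL n
  | and : TempRTL n → TempRTL n → TempRTL n
  | next : ℝ≥0 → TempRTL n → TempRTL n

/-- Satisfaction `(R, t) ⊨ φ` of a temporal RTL formula. -/
def TempSat {n : ℕ} (R : ℝ≥0 → Set (Fin n → ℝ)) : TempRTL n → ℝ≥0 → Prop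
  | TempRTL.all ψ, t => ∀ x ∈ R t, PropSat x ψ
  | TempRTL.or φ₁ φ₂, t => TempSat R φ₁ t ∨ TempSat R φ₂ t
  | TempRTL.and φ₁ φ₂, t => TempSat R φ₁ t ∧ TempSat R φ₂ t
  | TempRTL.next a φ, t => TempSat R φ (t + a)

/-- Quantitative semantics `P(R, φ, t)` of a temporal RTL formula, valued in the
extended reals (the infimum over an empty set is `+∞`). -/
noncomputable def RTLrob {n : ℕ} (R : ℝ≥0 → Set (Fin n → ℝ)) : TempRTL n → ℝ≥0 → EReal
  | TempRTL.all ψ, t => ⨅ x ∈ R t, varrho x ψ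
  | TempRTL.or φ₁ φ₂, t => max (RTLrob R φ₁ t) (RTLrob R φ₂ t)
  | TempRTL.and φ₁ φ₂, t => min (RTLrob R φ₁ t) (RTLrob R φ₂ t)
  | TempRTL.next a φ, t => RTLrob R φ (t + a)


lemma prop_quant_aux {n : ℕ} (ψ : PropRTL n) (x : Fin n → ℝ) :
    (varrho x ψ < 0 → ¬ PropSat x ψ) ∧ (¬ PropSat x ψ → varrho x ψ ≤ 0) ∧
    (0 < varrho x ψ → PropSat x ψ) ∧ (PropSat x ψ → 0 ≤ varrho x ψ) := by
  induction ψ with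
  | tt => simp [varrho, PropSat]
  | atom h =>
      simp only [varrho, PropSat]
      refine ⟨?_, ?_, ?_, ?_⟩ <;> intro hh
      · intro h0; exact absurd (EReal.coe_nonneg.mpr h0) (not_le.mpr hh)
      · exact le_of_lt (EReal.coe_neg'.mpr (not_le.mp hh))
      · exact le_of_lt (EReal.coe_pos.mp hh)
      · exact EReal.coe_nonneg.mpr hh
  | not ψ ih =>
      obtain ⟨a, b, c, d⟩ := ih
      have h1 : -varrho x ψ < 0 ↔ 0 < varrho x ψ := by
        rw [← neg_zero, EReal.neg_lt_neg_iff]; simp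
      have h2 : -varrho x ψ ≤ 0 ↔ 0 ≤ varrho x ψ := by
        rw [← neg_zero, EReal.neg_le_neg_iff]; simp
      have h3 : (0:EReal) < -varrho x ψ ↔ varrho x ψ < 0 := by
        rw [← neg_zero, EReal.neg_lt_neg_iff]; simp
      have h4 : (0:EReal) ≤ -varrho x ψ ↔ varrho x ψ ≤ 0 := by
        rw [← neg_zero, EReal.neg_le_neg_iff]; simp
      simp only [varrho, PropSat, not_not, h1, h2, h3, h4]
      exact ⟨c, d, a, b⟩
  | and ψ₁ ψ₂ ih₁ ih₂ =>
      obtain ⟨a1, b1, c1, d1⟩ := ih₁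
      obtain ⟨a2, b2, c2, d2⟩ := ih₂
      simp only [varrho, PropSat, min_lt_iff, lt_min_iff, le_min_iff, min_le_iff,
        not_and_or]
      refine ⟨?_, ?_, ?_, ?_⟩
      · rintro (h | h)
        · exact Or.inl (a1 h)
        · exact Or.inr (a2 h)
      · rintro (h | h)
        · exact Or.inl (b1 h)
        · exact Or.inr (b2 h)
      · rintro ⟨h1, h2⟩; exact ⟨c1 h1, c2 h2⟩
      · rintro ⟨h1, h2⟩; exact ⟨d1 h1, d2 h2⟩

/-- Soundness and completeness of the quantitative semantics at the
propositional level, part 2 of Theorem 2. -/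
theorem prop_quant_sound_complete_neg {n : ℕ} (ψ : PropRTL n) (x : Fin n → ℝ) :
    (varrho x ψ < 0 → ¬ PropSat x ψ) ∧ (¬ PropSat x ψ → varrho x ψ ≤ 0) := by
  exact ⟨(prop_quant_aux ψ x).1, (prop_quant_aux ψ x).2.1⟩
end

section
/- For every temporal RTL formula φ, every map R : ℝ≥0 → 2^(ℝⁿ), and every time t ∈ ℝ≥0: if P(R, φ, t) > 0 then (R, t) ⊨ φ, and if (R, t) ⊨ φ then P(R, φ, t) ≥ 0. (Soundness and completeness of the quantitative semantics of RTL, part 1 of Theorem 2.) -/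
open scoped NNReal

lemma prop_quant_sound_complete {n : ℕ} (ψ : PropRTL n) (x : Fin n → ℝ) :
    (0 < varrho x ψ → PropSat x ψ) ∧ (PropSat x ψ → 0 ≤ varrho x ψ) := by
  induction ψ with
  | tt => simp [varrho, PropSat]
  | atom h => constructor <;> simp [varrho, PropSat] <;> intro hh <;>
      exact_mod_cast hh.le
  | not ψ ih =>
    constructor
    · intro hpos hs
      have := ih.2 hs
      simp only [varrho] at hpos
      have : (0:EReal) < 0 := lt_of_lt_of_le hpos (by simpa using (by simpa using EReal.neg_le_neg_iff.mpr this))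
      exact lt_irrefl _ this
    · intro hs
      have hle : varrho x ψ ≤ 0 := by
        by_contra hgt
        exact hs (ih.1 (lt_of_not_ge hgt))
      simpa [varrho] using (by simpa using EReal.neg_le_neg_iff.mpr hle : (0:EReal) ≤ -varrho x ψ)
  | and ψ₁ ψ₂ ih₁ ih₂ =>
    constructor
    · intro hpos
      simp only [varrho, lt_min_iff] at hpos
      exact ⟨ih₁.1 hpos.1, ih₂.1 hpos.2⟩
    · intro ⟨h1, h2⟩
      simp only [varrho, le_min_iff]
      exact ⟨ih₁.2 h1, ih₂.2 h2⟩

/-- Soundness and completeness of the quantitative semantics of RTL,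
part 1 of Theorem 2. -/
theorem temp_quant_sound_complete_pos {n : ℕ} (φ : TempRTL n)
    (R : ℝ≥0 → Set (Fin n → ℝ)) (t : ℝ≥0) :
    (0 < RTLrob R φ t → TempSat R φ t) ∧ (TempSat R φ t → 0 ≤ RTLrob R φ t) := by
  induction φ generalizing t with
  | all ψ =>
    constructor
    · intro hpos x hx
      refine (prop_quant_sound_complete ψ x).1 (lt_of_lt_of_le hpos ?_)
      exact iInf₂_le x hx
    · intro hs
      exact le_iInf₂ fun x hx => (prop_quant_sound_complete ψ x).2 (hs x hx)
  | or φ₁ φ₂ ih₁ ih₂ =>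
    constructor
    · intro hpos
      rcases lt_max_iff.mp hpos with h | h
      · exact Or.inl ((ih₁ t).1 h)
      · exact Or.inr ((ih₂ t).1 h)
    · rintro (h | h)
      · exact le_max_of_le_left ((ih₁ t).2 h)
      · exact le_max_of_le_right ((ih₂ t).2 h)
  | and φ₁ φ₂ ih₁ ih₂ =>
    constructor
    · intro hpos
      rw [show RTLrob R (TempRTL.and φ₁ φ₂) t = min (RTLrob R φ₁ t) (RTLrob R φ₂ t) from rfl, lt_min_iff] at hpos
      exact ⟨(ih₁ t).1 hpos.1, (ih₂ t).1 hpos.2⟩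
    · intro ⟨h1, h2⟩
      exact le_min ((ih₁ t).2 h1) ((ih₂ t).2 h2)
  | next a φ ih => exact ⟨fun h => (ih (t+a)).1 h, fun h => (ih (t+a)).2 h⟩
end

section
/- Positive robustness sub-scores imply satisfaction (correctness of the verification step): let I be a nonempty finite index set, for each i ∈ I let L_i be a nonempty finite index set, and for each i ∈ I and ℓ ∈ L_i let τ_{iℓ} ∈ ℝ≥0 be a time delay and ψ_{iℓ} a propositional RTL formula. Let φ be the temporal RTL formula obtained as the finite conjunction over i ∈ I of the finite disjunctions over ℓ ∈ L_i of the subformulae ○_{τ_{iℓ}} 𝒜 ψ_{iℓ}, and for each i, ℓ define the sub-score p*_{iℓ} := inf_{x ∈ R(τ_{iℓ})} ϱ(x, ψ_{iℓ}). If min_{i ∈ I} max_{ℓ ∈ L_i} p*_{iℓ} > 0, then (R, 0) ⊨ φ. -/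
open scoped NNReal

/-- Finite conjunction over a nonempty finite index set `Fin (m + 1)`, formed by
iterating the binary conjunction of the grammar. -/
def bigAnd {n : ℕ} : (m : ℕ) → (Fin (m + 1) → TempRTL n) → TempRTL n
  | 0, f => f 0
  | m + 1, f => TempRTL.and (f 0) (bigAnd m (fun i => f i.succ))

/-- Finite disjunction over a nonempty finite index set `Fin (m + 1)`, formed by
iterating the binary disjunction of the grammar. -/
def bigOr {n : ℕ} : (m : ℕ) → (Fin (m + 1) → TempRTL n) → TempRTL n
  | 0, f => f 0
  | m + 1, f => TempRTL.or (f 0) (bigOr m (fun i => f i.succ))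


lemma varrho_sat {n : ℕ} (x : Fin n → ℝ) (ψ : PropRTL n) :
    ((0 : EReal) < varrho x ψ → PropSat x ψ) ∧ (varrho x ψ < 0 → ¬ PropSat x ψ) := by
  induction ψ with
  | tt => simp [varrho, PropSat]
  | atom h =>
      constructor
      · intro hp
        simp only [varrho] at hp
        have : (0:ℝ) < h x := by exact_mod_cast hp
        exact le_of_lt this
      · intro hn hs
        simp only [varrho] at hn
        have : h x < (0:ℝ) := by exact_mod_cast hn
        exact absurd hs (not_le.mpr this)
  | not ψ ih =>
      constructor
      · intro hp
        simp only [varrho] at hp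
        have : varrho x ψ < -0 := EReal.lt_neg_comm.mp hp
        rw [neg_zero] at this
        exact ih.2 this
      · intro hn hs
        simp only [varrho] at hn
        have h0 : -(0:EReal) < varrho x ψ := EReal.neg_lt_comm.mp hn
        rw [neg_zero] at h0
        exact hs (ih.1 h0)
  | and ψ₁ ψ₂ ih₁ ih₂ =>
      constructor
      · intro hp
        have h := lt_min_iff.mp (by simpa [varrho] using hp)
        exact ⟨ih₁.1 h.1, ih₂.1 h.2⟩
      · intro hn hs
        have h := min_lt_iff.mp (by simpa [varrho] using hn)
        rcases h with h | h
        · exact ih₁.2 h hs.1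
        · exact ih₂.2 h hs.2

lemma tempSat_bigAnd {n : ℕ} (R : ℝ≥0 → Set (Fin n → ℝ)) (t : ℝ≥0) :
    ∀ (m : ℕ) (f : Fin (m + 1) → TempRTL n),
      (∀ i, TempSat R (f i) t) → TempSat R (bigAnd m f) t := by
  intro m
  induction m with
  | zero => intro f h; exact h 0
  | succ m ih =>
      intro f h
      exact ⟨h 0, ih (fun i => f i.succ) (fun i => h i.succ)⟩

lemma tempSat_bigOr {n : ℕ} (R : ℝ≥0 → Set (Fin n → ℝ)) (t : ℝ≥0) :
    ∀ (m : ℕ) (f : Fin (m + 1) → TempRTL n),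
      (∃ i, TempSat R (f i) t) → TempSat R (bigOr m f) t := by
  intro m
  induction m with
  | zero =>
      intro f ⟨i, h⟩
      have : i = 0 := Fin.ext (by omega)
      rw [this] at h
      exact h
  | succ m ih =>
      intro f ⟨i, h⟩
      rcases Fin.eq_zero_or_eq_succ i with rfl | ⟨j, rfl⟩
      · exact Or.inl h
      · exact Or.inr (ih (fun i => f i.succ) ⟨j, h⟩)

/-- positive robustness sub-scores imply satisfaction (correctness of
the verification step). -/
theorem pos_subscores_imply_satisfaction {n m : ℕ} (k : Fin (m + 1) → ℕ)
    (τ : (i : Fin (m + 1)) → Fin (k i + 1) → ℝ≥0)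
    (ψ : (i : Fin (m + 1)) → Fin (k i + 1) → PropRTL n)
    (R : ℝ≥0 → Set (Fin n → ℝ))
    (hpos : (0 : EReal) < ⨅ i, ⨆ ℓ, ⨅ x ∈ R (τ i ℓ), varrho x (ψ i ℓ)) :
    TempSat R
      (bigAnd m (fun i =>
        bigOr (k i) (fun ℓ => TempRTL.next (τ i ℓ) (TempRTL.all (ψ i ℓ))))) 0 := by
  apply tempSat_bigAnd
  intro i
  have hi : (0 : EReal) < ⨆ ℓ, ⨅ x ∈ R (τ i ℓ), varrho x (ψ i ℓ) :=
    lt_of_lt_of_le hpos (iInf_le _ i)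
  obtain ⟨ℓ, hℓ⟩ := lt_iSup_iff.mp hi
  apply tempSat_bigOr
  refine ⟨ℓ, ?_⟩
  intro x hx
  rw [zero_add] at hx
  exact (varrho_sat x (ψ i ℓ)).1 (lt_of_lt_of_le hℓ (iInf₂_le x hx))
end
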